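/- In the unbalanced star-point problem with an isosceles triangle a = b and ψ_a = ψ_b ∈ (π/2, π), the general formula gives c' = (c/2)·((1 − cot²ψ_a)Θ² − 2 cot ψ_a (2a² − c²)) / (c² − Θ² cot ψ_a), where Θ² = c√(4a² − c²); moreover c' = 0 if and only if cot ψ_a = −√(4a² − c²)/c. -/

import Mathlib

open EuclideanGeometry

noncomputable instance : Fact (Module.finrank ℝ (EuclideanSpace ℝ (Fin 2)) = 2) := ⟨by simp⟩
noncomputable instance : Module.Oriented ℝ (EuclideanSpace ℝ (Fin 2)) (Fin 2) :=
  ⟨Module.Basis.orientation (EuclideanSpace.basisFun (Fin 2) ℝ).toBasis⟩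

set_option maxHeartbeats 1000000 in
theorem isosceles_interior_point (A B C X : EuclideanSpace ℝ (Fin 2))
    (a c ψ Θ2 : ℝ)
    (hABC : AffineIndependent ℝ ![A, B, C])
    (hX : X ∈ interior (convexHull ℝ {A, B, C}))
    (hc0 : 0 < c) (hac : c / 2 < a)
    (hBC : dist B C = a) (hCA : dist C A = a) (hAB : dist A B = c)
    (hψa : ∠ B X C = ψ) (hψb : ∠ C X A = ψ)
    (hψ1 : Real.pi / 2 < ψ) (hψ2 : ψ < Real.pi)
    (hΘ : Θ2 = c * Real.sqrt (4 * a ^ 2 - c ^ 2))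
    (hden : c ^ 2 - Θ2 * Real.cot ψ ≠ 0) :
    dist C X = (c / 2) * ((1 - Real.cot ψ ^ 2) * Θ2 -
        2 * Real.cot ψ * (2 * a ^ 2 - c ^ 2)) / (c ^ 2 - Θ2 * Real.cot ψ) ∧
    (dist C X = 0 ↔ Real.cot ψ = -Real.sqrt (4 * a ^ 2 - c ^ 2) / c) := by
  have hπ2ψ : Real.pi / 2 ≠ ψ := ne_of_lt hψ1
  -- X is distinct from the vertices
  have hAX : A ≠ X := by
    rintro rfl
    rw [angle_self_right] at hψb; exact hπ2ψ hψb
  have hBX : B ≠ X := by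
    rintro rfl
    rw [angle_self_left] at hψa; exact hπ2ψ hψa
  have hCX : C ≠ X := by
    rintro rfl
    rw [angle_self_right] at hψa; exact hπ2ψ hψa
  have hxpos : 0 < dist A X := dist_pos.2 hAX
  have hypos : 0 < dist B X := dist_pos.2 hBX
  have hzpos : 0 < dist C X := dist_pos.2 hCX
  -- trigonometric facts
  have hsin : 0 < Real.sin ψ :=
    Real.sin_pos_of_pos_of_lt_pi (lt_trans (by positivity) hψ1) hψ2
  have hcos : Real.cos ψ < 0 :=
    Real.cos_neg_of_pi_div_two_lt_of_lt hψ1 (by linarith [Real.pi_pos])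
  -- law of cosines in triangles BXC and CXA
  have law1 := law_cos B X C
  have law2 := law_cos C X A
  rw [hψa, hBC] at law1
  rw [hψb, hCA] at law2
  -- dist A X = dist B X
  have hxy : dist A X = dist B X := by
    have hfac : (dist B X - dist A X) *
        (dist B X + dist A X - 2 * dist C X * Real.cos ψ) = 0 := by linear_combination law2 - law1
    have hpos : 0 < dist B X + dist A X - 2 * dist C X * Real.cos ψ := by nlinarith
    have := mul_eq_zero.1 hfac
    rcases this with h | h
    · linarith
    · linarith
  -- oriented angles
  have hsum : ∡ B X C + ∡ C X A = ∡ B X A := oangle_add hBX hCX hAX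
  have h1 := oangle_eq_angle_or_eq_neg_angle hBX hCX
  have h2 := oangle_eq_angle_or_eq_neg_angle hCX hAX
  rw [hψa] at h1
  rw [hψb] at h2
  -- cos of angle A X B
  have hcosAXB : Real.cos (∠ B X A) = Real.cos (2 * ψ) := by
    have hC := (cos_oangle_eq_cos_angle hBX hAX).symm
    rcases h1 with h1 | h1 <;> rcases h2 with h2 | h2
    · rw [h1, h2] at hsum
      rw [hC, ← hsum]
      rw [← Real.Angle.coe_add, Real.Angle.cos_coe, show ψ + ψ = 2 * ψ by ring]
    · exfalso
      rw [h1, h2] at hsum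
      have h0 : ∡ B X A = 0 := by
        rw [← hsum]
        simp
      have hang0 : ∠ B X A = 0 := (oangle_eq_zero_iff_angle_eq_zero hBX hAX).1 h0
      have law3 := law_cos B X A
      rw [hang0, Real.cos_zero, dist_comm B A, hAB, ← hxy] at law3
      nlinarith
    · exfalso
      rw [h1, h2] at hsum
      have h0 : ∡ B X A = 0 := by
        rw [← hsum]
        simp
      have hang0 : ∠ B X A = 0 := (oangle_eq_zero_iff_angle_eq_zero hBX hAX).1 h0
      have law3 := law_cos B X A
      rw [hang0, Real.cos_zero, dist_comm B A, hAB, ← hxy] at law3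
      nlinarith
    · rw [h1, h2] at hsum
      rw [hC, ← hsum]
      rw [← Real.Angle.coe_neg, ← Real.Angle.coe_add, Real.Angle.cos_coe,
        show -ψ + -ψ = -(2 * ψ) by ring, Real.cos_neg]
  -- x * sin ψ = c / 2
  have law3 := law_cos B X A
  rw [hcosAXB, dist_comm B A, hAB, ← hxy] at law3
  have hc2 : c ^ 2 = 4 * dist A X ^ 2 * Real.sin ψ ^ 2 := by
    have ht : Real.cos (2 * ψ) = 1 - 2 * Real.sin ψ ^ 2 := by
      rw [Real.cos_two_mul]
      linear_combination 2 * Real.sin_sq_add_cos_sq ψ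
    linear_combination law3 - 2 * dist A X ^ 2 * ht
  have hxsin : dist A X * Real.sin ψ = c / 2 := by
    nlinarith [hc2, mul_pos hxpos hsin, sq_nonneg (2 * dist A X * Real.sin ψ - c),
      sq_nonneg (2 * dist A X * Real.sin ψ + c)]
  -- solve for dist C X
  set s := Real.sqrt (4 * a ^ 2 - c ^ 2) with hs
  have hs2 : s ^ 2 = 4 * a ^ 2 - c ^ 2 := Real.sq_sqrt (by nlinarith)
  have hspos : 0 < s := Real.sqrt_pos.2 (by nlinarith)
  have hsc : dist A X ^ 2 * Real.sin ψ ^ 2 = c ^ 2 / 4 := by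
    linear_combination (dist A X * Real.sin ψ + c / 2) * hxsin
  have hxc2 : dist A X ^ 2 * Real.cos ψ ^ 2 = dist A X ^ 2 - c ^ 2 / 4 := by
    linear_combination dist A X ^ 2 * Real.sin_sq_add_cos_sq ψ - hsc
  have hquad : (dist C X - dist A X * Real.cos ψ) ^ 2 = (s / 2) ^ 2 := by
    linear_combination -law2 + hxc2 - hs2 / 4
  have hz : dist C X = dist A X * Real.cos ψ + s / 2 := by
    have h' : dist C X - dist A X * Real.cos ψ = s / 2 ∨
        dist C X - dist A X * Real.cos ψ = -(s / 2) := sq_eq_sq_iff_eq_or_eq_neg.1 hquad |>.imp id id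
    rcases h' with h' | h'
    · linarith
    · nlinarith [mul_pos hxpos (neg_pos.2 hcos)]
  -- express via cot
  have hcot : Real.cot ψ = Real.cos ψ / Real.sin ψ := Real.cot_eq_cos_div_sin ψ
  have hxcos : dist A X * Real.cos ψ = (c / 2) * Real.cot ψ := by
    rw [hcot]
    have hsne : Real.sin ψ ≠ 0 := hsin.ne'
    field_simp
    linear_combination 2 * Real.cos ψ * hxsin
  rw [hxcos] at hz
  set K := Real.cot ψ with hK
  rw [hΘ] at hden ⊢
  constructor
  · rw [hz]
    rw [eq_div_iff hden]
    linear_combination (-(c * K) / 2) * hs2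
  · rw [hz]
    constructor
    · intro h
      have : K = -s / c := by
        field_simp
        linarith
      exact this
    · intro h
      rw [h]
      field_simp
      ring
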